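/- Let 0 < α < γ < 1, α' ∈ (0,1], let k, t ≥ 1 be integers, and let F be a set of probability measures on a measurable space Ω. Suppose there exists C ⊆ F such that: (i) for every f ∈ F there is c ∈ C with dTV(f,c) ≤ α, and (ii) for every f ∈ F, the set {c ∈ C : dTV(f,c) ≤ γ} has at most t elements. Let D = ⋃_{s=1}^k { (w, f) ∈ Δ_s × F^s : w_i ≥ α'/k for all i } be the class of (k, α'/k)-dense mixtures over F, represented as tuples of varying length s ≤ k, with κ_mix between mixtures with different numbers of components defined to be +∞. Then there exists J ⊆ ⋃_{s=1}^k (Δ_s × F^s) such that: (i) every element of D is within κ_mix-distance α of some element of J, and (ii) for every element g of D, the set of elements of J within κ_mix-distance γ of g has at most k!·t^k·⌈k/α⌉^k elements. -/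

import Mathlib

open MeasureTheory
open scoped ENNReal

/-- Total variation distance between two measures:
`dTV(μ,ν) = sup` over measurable sets `A` of `|μ(A) − ν(A)|`. -/
noncomputable def tvDist {Ω : Type*} [MeasurableSpace Ω] (μ ν : Measure Ω) : ℝ :=
  ⨆ A : {A : Set Ω // MeasurableSet A}, |(μ A).toReal - (ν A).toReal|

/-- The probability simplex `Δ_s`. -/
def probSimplex (s : ℕ) : Set (Fin s → ℝ) :=
  {w | (∀ i, 0 ≤ w i) ∧ ∑ i, w i = 1}

/-- A mixture with a variable number of components, represented as a tuple
`⟨s, (w, f)⟩` of its number of components `s`, weights `w` and components `f`. -/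
abbrev VarMixture (Ω : Type*) [MeasurableSpace Ω] :=
  Σ s : ℕ, (Fin s → ℝ) × (Fin s → Measure Ω)

/-- The union over `1 ≤ s ≤ k` of `Δ_s × F^s`: mixtures with at most `k`
components, all from `F`. -/
def mixturesUpTo {Ω : Type*} [MeasurableSpace Ω] (k : ℕ) (F : Set (Measure Ω)) :
    Set (VarMixture Ω) :=
  {g | 1 ≤ g.1 ∧ g.1 ≤ k ∧ g.2.1 ∈ probSimplex g.1 ∧ ∀ i, g.2.2 i ∈ F}

/-- The class of `(k, η)`-dense mixtures over `F`: mixtures with `s ≤ k`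
components from `F` and all weights at least `η`. -/
def denseMixtures {Ω : Type*} [MeasurableSpace Ω] (k : ℕ) (η : ℝ)
    (F : Set (Measure Ω)) : Set (VarMixture Ω) :=
  {g | g ∈ mixturesUpTo k F ∧ ∀ i, η ≤ g.2.1 i}

/-- The component-wise distance `κ_mix` between two mixtures, valued in `ℝ≥0∞`:
for mixtures with the same number `s` of components it is the min over
permutations `π` of the max over components of
`max (s·|w_i − w'_{π(i)}|, dTV(f_i, f'_{π(i)}))`; for mixtures with different
numbers of components it is `+∞`. -/
noncomputable def kappaMixE {Ω : Type*} [MeasurableSpace Ω]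
    (p q : VarMixture Ω) : ℝ≥0∞ :=
  if h : p.1 = q.1 then
    ENNReal.ofReal (⨅ π : Equiv.Perm (Fin p.1), ⨆ i : Fin p.1,
      max ((p.1 : ℝ) * |p.2.1 i - q.2.1 (Fin.cast h (π i))|)
        (tvDist (p.2.2 i) (q.2.2 (Fin.cast h (π i)))))
  else ⊤

/-- Rounding a simplex point to a grid with denominator `N`. -/
lemma round_to_grid (s N : ℕ) (hs : 1 ≤ s) (hN : 1 ≤ N) (w : Fin s → ℝ)
    (h0 : ∀ i, 0 ≤ w i) (h1 : ∑ i, w i = 1) :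
    ∃ w' : Fin s → ℝ, (∀ i, 0 ≤ w' i) ∧ (∑ i, w' i = 1) ∧
      (∀ i, ∃ m : ℕ, w' i = (m : ℝ) / N) ∧ (∀ i, |w i - w' i| ≤ 1 / N) := by
  have hN0 : (0:ℝ) < N := by exact_mod_cast hN
  set m : Fin s → ℕ := fun i => ⌊(N:ℝ) * w i⌋₊ with hm
  have hm_le : ∀ i, (m i : ℝ) ≤ (N:ℝ) * w i := fun i =>
    Nat.floor_le (mul_nonneg hN0.le (h0 i))
  have hm_lt : ∀ i, (N:ℝ) * w i < m i + 1 := fun i => Nat.lt_floor_add_one _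
  have hsum_le : ∑ i, m i ≤ N := by
    have : ((∑ i, m i : ℕ) : ℝ) ≤ (N : ℝ) := by
      push_cast
      calc ∑ i, (m i : ℝ) ≤ ∑ i, (N:ℝ) * w i := Finset.sum_le_sum fun i _ => hm_le i
        _ = N := by rw [← Finset.mul_sum, h1, mul_one]
    exact_mod_cast this
  have hsum_gt : N < ∑ i, m i + s := by
    have hne : (Finset.univ : Finset (Fin s)).Nonempty := by
      simpa [Finset.univ_nonempty_iff, ← Fin.pos_iff_nonempty] using (show 0 < s from hs)
    have : (N : ℝ) < ∑ i, ((m i : ℝ) + 1) := by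
      calc (N:ℝ) = ∑ i, (N:ℝ) * w i := by rw [← Finset.mul_sum, h1, mul_one]
        _ < ∑ i, ((m i : ℝ) + 1) :=
          Finset.sum_lt_sum_of_nonempty hne fun i _ => hm_lt i
    have : (N : ℝ) < (∑ i, m i : ℕ) + (s : ℕ) := by
      push_cast
      simpa [Finset.sum_add_distrib] using this
    exact_mod_cast this
  set r : ℕ := N - ∑ i, m i with hr
  have hrs : r ≤ s := by omega
  obtain ⟨R, -, hRcard⟩ := Finset.exists_subset_card_eq (s := (Finset.univ : Finset (Fin s))) (n := r)
    (by simpa using hrs)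
  refine ⟨fun i => ((m i + if i ∈ R then 1 else 0 : ℕ) : ℝ) / N, fun i => by positivity,
    ?_, ?_, ?_⟩
  · rw [← Finset.sum_div]
    have hcnt : (∑ x : Fin s, if x ∈ R then (1:ℝ) else 0) = r := by
      rw [Finset.sum_ite_mem, Finset.univ_inter, Finset.sum_const, hRcard]; simp
    have hNsum : (∑ i, m i) + r = N := by omega
    have : ∑ i, ((m i + if i ∈ R then 1 else 0 : ℕ) : ℝ) = N := by
      push_cast
      rw [Finset.sum_add_distrib, hcnt]
      exact_mod_cast hNsum
    rw [this]
    field_simp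
  · exact fun i => ⟨_, rfl⟩
  · intro i
    have hc : (1/(N:ℝ))*N = 1 := one_div_mul_cancel hN0.ne'
    rw [abs_le]
    constructor
    · have h1' : ((m i + if i ∈ R then 1 else 0 : ℕ) : ℝ) ≤ (N:ℝ) * w i + 1 := by
        have := hm_le i
        split <;> push_cast <;> nlinarith [hm_lt i]
      rw [neg_le, neg_sub, sub_le_iff_le_add, div_le_iff₀ hN0]
      nlinarith [hc]
    · have h2' : (N:ℝ) * w i - 1 ≤ ((m i + if i ∈ R then 1 else 0 : ℕ) : ℝ) := by
        split <;> push_cast <;> nlinarith [hm_lt i]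
      rw [sub_le_iff_le_add, ← add_div, le_div_iff₀ hN0]
      nlinarith [h2']

/-- The set of grid points with denominator `Q` in a window of radius `δ` around `x`
is finite with at most `⌊2δQ⌋ + 1 ≤ M` elements. -/
lemma grid_window_card (Q M : ℕ) (hQ : 0 < Q) (x δ : ℝ) (hδ : 0 ≤ δ)
    (hM : ⌊2 * δ * Q⌋₊ + 1 ≤ M) :
    {y : ℝ | (∃ m : ℕ, y = (m : ℝ) / Q) ∧ |x - y| ≤ δ}.Finite ∧
    {y : ℝ | (∃ m : ℕ, y = (m : ℝ) / Q) ∧ |x - y| ≤ δ}.ncard ≤ M := by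
  have hQ0 : (0:ℝ) < Q := by exact_mod_cast hQ
  set a : ℝ := (x - δ) * Q with ha
  set b : ℝ := (x + δ) * Q with hb
  have hsub : {y : ℝ | (∃ m : ℕ, y = (m : ℝ) / Q) ∧ |x - y| ≤ δ}
      ⊆ (fun m : ℕ => (m : ℝ) / Q) '' ↑(Finset.Icc ⌈a⌉₊ ⌊b⌋₊) := by
    rintro y ⟨⟨m, rfl⟩, hy⟩
    refine ⟨m, ?_, rfl⟩
    rw [abs_le] at hy
    have hmQ : ((m:ℝ)/Q)*Q = m := div_mul_cancel₀ _ hQ0.ne'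
    simp only [Finset.coe_Icc, Set.mem_Icc]
    constructor
    · rw [Nat.ceil_le]
      rw [ha]
      nlinarith [hy.2, hmQ]
    · apply Nat.le_floor
      rw [hb]
      nlinarith [hy.1, hmQ]
  have hfin : ((fun m : ℕ => (m : ℝ) / Q) '' ↑(Finset.Icc ⌈a⌉₊ ⌊b⌋₊)).Finite :=
    (Finset.finite_toSet _).image _
  refine ⟨hfin.subset hsub, le_trans (Set.ncard_le_ncard hsub hfin) ?_⟩
  calc ((fun m : ℕ => (m : ℝ) / Q) '' ↑(Finset.Icc ⌈a⌉₊ ⌊b⌋₊)).ncard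
      ≤ (↑(Finset.Icc ⌈a⌉₊ ⌊b⌋₊) : Set ℕ).ncard :=
        Set.ncard_image_le (Finset.finite_toSet _)
    _ = (Finset.Icc ⌈a⌉₊ ⌊b⌋₊).card := Set.ncard_coe_finset _
    _ = ⌊b⌋₊ + 1 - ⌈a⌉₊ := Nat.card_Icc _ _
    _ ≤ M := by
        rw [tsub_le_iff_right]
        have h1 : b ≤ 2 * δ * Q + (⌈a⌉₊ : ℝ) := by
          have : a ≤ (⌈a⌉₊ : ℝ) := Nat.le_ceil a
          rw [ha] at this; rw [hb]; nlinarith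
        have h2 : ⌊b⌋₊ ≤ ⌊2 * δ * Q + (⌈a⌉₊ : ℝ)⌋₊ := Nat.floor_mono h1
        rw [Nat.floor_add_natCast (by positivity)] at h2
        omega

lemma kappaMixE_mk_mk {Ω : Type*} [MeasurableSpace Ω] (s : ℕ) (w w' : Fin s → ℝ)
    (f c : Fin s → Measure Ω) :
    kappaMixE ⟨s, (w, f)⟩ ⟨s, (w', c)⟩ =
      ENNReal.ofReal (⨅ π : Equiv.Perm (Fin s), ⨆ i : Fin s,
        max ((s : ℝ) * |w i - w' (π i)|) (tvDist (f i) (c (π i)))) := by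
  simp [kappaMixE]

lemma kappaMixE_mk_mk_ne {Ω : Type*} [MeasurableSpace Ω] {s s' : ℕ} (h : s ≠ s')
    (p : (Fin s → ℝ) × (Fin s → Measure Ω)) (q : (Fin s' → ℝ) × (Fin s' → Measure Ω)) :
    kappaMixE ⟨s, p⟩ ⟨s', q⟩ = ⊤ := by
  simp [kappaMixE, h]

theorem denseMixtures_locally_small_cover
    {Ω : Type*} [MeasurableSpace Ω]
    (α γ α' : ℝ) (hα : 0 < α) (hαγ : α < γ) (hγ : γ < 1) (hα' : α' ∈ Set.Ioc (0 : ℝ) 1)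
    (k t : ℕ) (hk : 1 ≤ k) (ht : 1 ≤ t)
    (F : Set (Measure Ω)) (hF : ∀ f ∈ F, IsProbabilityMeasure f)
    (C : Set (Measure Ω)) (hCF : C ⊆ F)
    (hcover : ∀ f ∈ F, ∃ c ∈ C, tvDist f c ≤ α)
    (hsmall : ∀ f ∈ F, ({c ∈ C | tvDist f c ≤ γ}).Finite ∧
              ({c ∈ C | tvDist f c ≤ γ}).ncard ≤ t) :
    ∃ J ⊆ mixturesUpTo k F,
      (∀ g ∈ denseMixtures k (α' / k) F, ∃ j ∈ J, kappaMixE g j ≤ ENNReal.ofReal α) ∧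
      (∀ g ∈ denseMixtures k (α' / k) F,
        ({j ∈ J | kappaMixE g j ≤ ENNReal.ofReal γ}).Finite ∧
        ({j ∈ J | kappaMixE g j ≤ ENNReal.ofReal γ}).ncard
          ≤ Nat.factorial k * t ^ k * (⌈(k : ℝ) / α⌉₊) ^ k) := by
  classical
  have hγ0 : (0:ℝ) < γ := hα.trans hαγ
  set J : Set (VarMixture Ω) :=
    {j | j ∈ mixturesUpTo k F ∧ (∀ i, ∃ m : ℕ, j.2.1 i = (m : ℝ) / ⌈(j.1 : ℝ) / α⌉₊) ∧
      ∀ i, j.2.2 i ∈ C} with hJ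
  refine ⟨J, fun j hj => hj.1, ?_, ?_⟩
  · -- covering
    rintro ⟨s, w, f⟩ hg
    obtain ⟨⟨hs1, hsk, hw, hfF⟩, hdense⟩ := hg
    haveI : Nonempty (Fin s) := Fin.pos_iff_nonempty.mp hs1
    have hs0 : (0:ℝ) < s := by exact_mod_cast hs1
    set Q := ⌈(s:ℝ)/α⌉₊ with hQdef
    have hQpos : 0 < Q := Nat.ceil_pos.mpr (div_pos hs0 hα)
    have hQ0 : (0:ℝ) < Q := by exact_mod_cast hQpos
    obtain ⟨w', hw'0, hw'1, hw'grid, hw'close⟩ :=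
      round_to_grid s Q hs1 hQpos w hw.1 hw.2
    choose c hcC hcα using fun i => hcover (f i) (hfF i)
    refine ⟨⟨s, (w', c)⟩,
      ⟨⟨hs1, hsk, ⟨hw'0, hw'1⟩, fun i => hCF (hcC i)⟩, hw'grid, hcC⟩, ?_⟩
    rw [kappaMixE_mk_mk]
    refine ENNReal.ofReal_le_ofReal ?_
    refine le_trans (ciInf_le (Set.finite_range _).bddBelow 1) ?_
    refine ciSup_le fun i => ?_
    simp only [Equiv.Perm.coe_one, id_eq]
    refine max_le ?_ (hcα i)
    have hceil : (s:ℝ)/α ≤ Q := Nat.le_ceil _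
    have hsαQ : (s:ℝ) ≤ Q * α := (div_le_iff₀ hα).mp hceil
    calc (s:ℝ) * |w i - w' i| ≤ (s:ℝ) * (1/Q) :=
          mul_le_mul_of_nonneg_left (hw'close i) hs0.le
      _ ≤ α := by
          rw [mul_one_div, div_le_iff₀ hQ0]
          nlinarith
  · -- local smallness
    rintro ⟨s, w, f⟩ hg
    obtain ⟨⟨hs1, hsk, hw, hfF⟩, hdense⟩ := hg
    haveI : Nonempty (Fin s) := Fin.pos_iff_nonempty.mp hs1
    have hs0 : (0:ℝ) < s := by exact_mod_cast hs1
    have hk0 : (0:ℝ) < k := by exact_mod_cast hk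
    set Q := ⌈(s:ℝ)/α⌉₊ with hQdef
    have hQpos : 0 < Q := Nat.ceil_pos.mpr (div_pos hs0 hα)
    have hQ0 : (0:ℝ) < Q := by exact_mod_cast hQpos
    set N' := ⌈(k:ℝ)/α⌉₊ with hN'def
    have hN'1 : 1 ≤ N' := Nat.ceil_pos.mpr (div_pos hk0 hα)
    have hQN' : Q ≤ N' := Nat.ceil_le_ceil (by gcongr)
    set T : Fin s → Set (Measure Ω) := fun i => {c ∈ C | tvDist (f i) c ≤ γ} with hT
    have hTfin : ∀ i, (T i).Finite := fun i => (hsmall (f i) (hfF i)).1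
    have hTcard : ∀ i, (T i).ncard ≤ t := fun i => (hsmall (f i) (hfF i)).2
    set W : Fin s → Set ℝ := fun i =>
      {y | (∃ m : ℕ, y = (m:ℝ)/Q) ∧ |w i - y| ≤ γ/s ∧ (s = 1 → y = 1)} with hWdef
    have hWfc : ∀ i, (W i).Finite ∧ (W i).ncard ≤ N' := by
      intro i
      rcases eq_or_lt_of_le hs1 with h1 | h2
      · have hsub : W i ⊆ {1} := by
          rintro y ⟨-, -, hy⟩
          exact hy h1.symm
        exact ⟨(Set.finite_singleton 1).subset hsub,
          le_trans (Set.ncard_le_ncard hsub (Set.finite_singleton 1))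
            (by simpa using hN'1)⟩
      · have h2' : (2:ℝ) ≤ s := by exact_mod_cast h2
        have hM : ⌊2 * (γ/s) * Q⌋₊ + 1 ≤ N' := by
          have hlt : 2 * (γ/s) * Q < Q := by
            have hfrac : 2 * (γ/s) < 1 := by
              rw [mul_div_assoc', div_lt_one hs0]
              nlinarith
            nlinarith
          have hfl : ⌊2 * (γ/s) * Q⌋₊ < Q := by
            rw [Nat.floor_lt (by positivity)]
            exact_mod_cast hlt
          omega
        have hKey := grid_window_card Q N' hQpos (w i) (γ/s) (by positivity) hM
        have hsub : W i ⊆ {y : ℝ | (∃ m : ℕ, y = (m:ℝ)/Q) ∧ |w i - y| ≤ γ/s} :=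
          fun y hy => ⟨hy.1, hy.2.1⟩
        exact ⟨hKey.1.subset hsub, le_trans (Set.ncard_le_ncard hsub hKey.1) hKey.2⟩
    set WF : Fin s → Finset ℝ := fun i => (hWfc i).1.toFinset with hWF
    set TF : Fin s → Finset (Measure Ω) := fun i => (hTfin i).toFinset with hTF
    set B : Finset ((Fin s → ℝ) × (Fin s → Measure Ω)) :=
      Finset.univ.biUnion (fun σ : Equiv.Perm (Fin s) =>
        (Fintype.piFinset fun i => WF (σ i)) ×ˢ (Fintype.piFinset fun i => TF (σ i)))
      with hB
    have hsubset : {j ∈ J | kappaMixE ⟨s, (w, f)⟩ j ≤ ENNReal.ofReal γ}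
        ⊆ (fun p => (⟨s, p⟩ : VarMixture Ω)) '' ↑B := by
      rintro ⟨s', w', c'⟩ ⟨hjJ, hjγ⟩
      have hss' : s = s' := by
        by_contra h
        rw [kappaMixE_mk_mk_ne h] at hjγ
        exact ENNReal.ofReal_ne_top (top_le_iff.mp hjγ)
      subst hss'
      obtain ⟨hjmix, hjgrid, hjC⟩ := hjJ
      rw [kappaMixE_mk_mk] at hjγ
      have hiinf : (⨅ π : Equiv.Perm (Fin s), ⨆ i, max ((s:ℝ) * |w i - w' (π i)|)
          (tvDist (f i) (c' (π i)))) ≤ γ :=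
        (ENNReal.ofReal_le_ofReal_iff hγ0.le).mp hjγ
      obtain ⟨π, hπ⟩ := Finite.exists_min (fun π : Equiv.Perm (Fin s) =>
        ⨆ i, max ((s:ℝ) * |w i - w' (π i)|) (tvDist (f i) (c' (π i))))
      have hπγ : (⨆ i, max ((s:ℝ) * |w i - w' (π i)|) (tvDist (f i) (c' (π i)))) ≤ γ :=
        le_trans (le_ciInf hπ) hiinf
      have hterm : ∀ i, max ((s:ℝ) * |w i - w' (π i)|) (tvDist (f i) (c' (π i))) ≤ γ :=
        fun i => le_trans (le_ciSup (f := fun i => max ((s:ℝ) * |w i - w' (π i)|)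
          (tvDist (f i) (c' (π i)))) (Set.finite_range _).bddAbove i) hπγ
      refine ⟨(w', c'), ?_, rfl⟩
      rw [Finset.mem_coe, hB]
      refine Finset.mem_biUnion.mpr ⟨π⁻¹, Finset.mem_univ _, ?_⟩
      rw [Finset.mem_product]
      constructor
      · rw [Fintype.mem_piFinset]
        intro i'
        rw [hWF, Set.Finite.mem_toFinset]
        have hwi : w' (π (π⁻¹ i')) ∈ W (π⁻¹ i') := by
          set i := π⁻¹ i' with hi
          refine ⟨hjgrid (π i), ?_, ?_⟩
          · have hmax := le_trans (le_max_left _ _) (hterm i)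
            rw [le_div_iff₀ hs0, mul_comm]
            exact hmax
          · intro h1
            have hsum := hjmix.2.2.1.2
            subst h1
            have hone : w' 0 = 1 := by simpa using hsum
            have hzero : π i = 0 := Subsingleton.elim _ _
            rw [hzero]
            exact hone
        rwa [← Equiv.Perm.mul_apply, mul_inv_cancel, Equiv.Perm.one_apply] at hwi
      · rw [Fintype.mem_piFinset]
        intro i'
        rw [hTF, Set.Finite.mem_toFinset]
        have hci : c' (π (π⁻¹ i')) ∈ T (π⁻¹ i') :=
          ⟨hjC (π (π⁻¹ i')), le_trans (le_max_right _ _) (hterm (π⁻¹ i'))⟩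
        rwa [← Equiv.Perm.mul_apply, mul_inv_cancel, Equiv.Perm.one_apply] at hci
    have hBfin : ((fun p => (⟨s, p⟩ : VarMixture Ω)) '' ↑B).Finite :=
      (B.finite_toSet).image _
    refine ⟨hBfin.subset hsubset, ?_⟩
    have hcard2 : ((fun p => (⟨s, p⟩ : VarMixture Ω)) '' ↑B).ncard ≤ B.card := by
      refine le_trans (Set.ncard_image_le B.finite_toSet) ?_
      rw [Set.ncard_coe_finset]
    have hWFcard : ∀ i, (WF i).card ≤ N' := by
      intro i
      rw [hWF]
      rw [← Set.ncard_eq_toFinset_card (W i) (hWfc i).1]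
      exact (hWfc i).2
    have hTFcard : ∀ i, (TF i).card ≤ t := by
      intro i
      rw [hTF]
      rw [← Set.ncard_eq_toFinset_card (T i) (hTfin i)]
      exact hTcard i
    have hBcard : B.card ≤ Nat.factorial s * (N' ^ s * t ^ s) := by
      rw [hB]
      have hone : ∀ σ : Equiv.Perm (Fin s),
          ((Fintype.piFinset fun i => WF (σ i)) ×ˢ
            (Fintype.piFinset fun i => TF (σ i))).card ≤ N' ^ s * t ^ s := by
        intro σ
        rw [Finset.card_product, Fintype.card_piFinset, Fintype.card_piFinset]
        have e1 : ∏ i, (WF (σ i)).card = ∏ i, (WF i).card :=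
          Equiv.prod_comp σ (fun i => (WF i).card)
        have e2 : ∏ i, (TF (σ i)).card = ∏ i, (TF i).card :=
          Equiv.prod_comp σ (fun i => (TF i).card)
        rw [e1, e2]
        have p1 : ∏ i, (WF i).card ≤ ∏ _i : Fin s, N' :=
          Finset.prod_le_prod' fun i _ => hWFcard i
        have p2 : ∏ i, (TF i).card ≤ ∏ _i : Fin s, t :=
          Finset.prod_le_prod' fun i _ => hTFcard i
        simp only [Finset.prod_const, Finset.card_univ, Fintype.card_fin] at p1 p2
        exact Nat.mul_le_mul p1 p2
      calc (Finset.univ.biUnion fun σ : Equiv.Perm (Fin s) =>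
            (Fintype.piFinset fun i => WF (σ i)) ×ˢ
              (Fintype.piFinset fun i => TF (σ i))).card
          ≤ ∑ σ : Equiv.Perm (Fin s), ((Fintype.piFinset fun i => WF (σ i)) ×ˢ
              (Fintype.piFinset fun i => TF (σ i))).card := Finset.card_biUnion_le
        _ ≤ ∑ _σ : Equiv.Perm (Fin s), N' ^ s * t ^ s :=
            Finset.sum_le_sum fun σ _ => hone σ
        _ = Nat.factorial s * (N' ^ s * t ^ s) := by
            rw [Finset.sum_const, Finset.card_univ, Fintype.card_perm, Fintype.card_fin,
              smul_eq_mul]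
    calc ({j ∈ J | kappaMixE ⟨s, (w, f)⟩ j ≤ ENNReal.ofReal γ}).ncard
        ≤ ((fun p => (⟨s, p⟩ : VarMixture Ω)) '' ↑B).ncard :=
          Set.ncard_le_ncard hsubset hBfin
      _ ≤ B.card := hcard2
      _ ≤ Nat.factorial s * (N' ^ s * t ^ s) := hBcard
      _ ≤ Nat.factorial k * (N' ^ k * t ^ k) :=
          Nat.mul_le_mul (Nat.factorial_le hsk)
            (Nat.mul_le_mul (Nat.pow_le_pow_right hN'1 hsk) (Nat.pow_le_pow_right ht hsk))
      _ = Nat.factorial k * t ^ k * N' ^ k := by ring
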